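/- Fix ε ∈ ℝ and let g be a differentiable function on (−∞, ε) satisfying g'(s) = 1 − Z(g(s))/(q·W(g(s))) for all s < ε. (i) If q > μ, g takes values in (0, k*) and lim_{s→−∞} g(s) = k*, then lim_{s→−∞} g'(s) = 0. (ii) If q ≤ μ, g takes values in (0, ∞) and lim_{s→−∞} g(s) = +∞, then lim_{s→−∞} g'(s) = 1 − 1/γ₂. -/

import Mathlib

open Real Filter Set MeasureTheory

noncomputable def dlt (σ μ q : ℝ) : ℝ := Real.sqrt ((μ / σ ^ 2 - 1 / 2) ^ 2 + 2 * q / σ ^ 2)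

noncomputable def gma (σ μ : ℝ) : ℝ := 1 / 2 - μ / σ ^ 2

noncomputable def gma1 (σ μ q : ℝ) : ℝ := gma σ μ - dlt σ μ q

noncomputable def gma2 (σ μ q : ℝ) : ℝ := gma σ μ + dlt σ μ q

/-- The scale function `W^{(q)}` of `X_t = (μ - σ²/2) t + σ B_t`. -/
noncomputable def W (σ μ q : ℝ) (x : ℝ) : ℝ :=
  if 0 ≤ x then 2 / (σ ^ 2 * dlt σ μ q) * Real.exp (gma σ μ * x) * Real.sinh (dlt σ μ q * x)
  else 0

/-- The scale function `Z^{(q)}` of `X_t = (μ - σ²/2) t + σ B_t`. -/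
noncomputable def Z (σ μ q : ℝ) (x : ℝ) : ℝ :=
  if 0 ≤ x then
    Real.exp (gma σ μ * x) * Real.cosh (dlt σ μ q * x)
      - gma σ μ / dlt σ μ q * Real.exp (gma σ μ * x) * Real.sinh (dlt σ μ q * x)
  else 1

/-- `k* = (γ₂ - γ₁)⁻¹ log((1 - 1/γ₁)/(1 - 1/γ₂))`. -/
noncomputable def kstar (σ μ q : ℝ) : ℝ :=
  (gma2 σ μ q - gma1 σ μ q)⁻¹ *
    Real.log ((1 - 1 / gma1 σ μ q) / (1 - 1 / gma2 σ μ q))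

lemma dlt_pos (σ μ q : ℝ) (hσ : 0 < σ) (hq : 0 < q) : 0 < dlt σ μ q :=
  Real.sqrt_pos.mpr (by positivity)

lemma dlt_sq (σ μ q : ℝ) (hσ : 0 < σ) (hq : 0 < q) :
    dlt σ μ q ^ 2 = gma σ μ ^ 2 + 2 * q / σ ^ 2 := by
  rw [dlt, sq_sqrt (by positivity), gma]; ring

lemma gma2_pos (σ μ q : ℝ) (hσ : 0 < σ) (hq : 0 < q) : 0 < gma2 σ μ q := by
  have hδ := dlt_pos σ μ q hσ hq
  have hsq := dlt_sq σ μ q hσ hq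
  have hc : 0 < 2 * q / σ ^ 2 := by positivity
  rw [gma2]
  nlinarith [hδ, hsq, hc]

lemma gma1_mul_gma2 (σ μ q : ℝ) (hσ : 0 < σ) (hq : 0 < q) :
    gma1 σ μ q * gma2 σ μ q = -(2 * q / σ ^ 2) := by
  rw [gma1, gma2]
  linear_combination -(dlt_sq σ μ q hσ hq)

lemma gma1_neg (σ μ q : ℝ) (hσ : 0 < σ) (hq : 0 < q) : gma1 σ μ q < 0 := by
  have h := gma1_mul_gma2 σ μ q hσ hq
  have hb := gma2_pos σ μ q hσ hq
  have hc : 0 < 2 * q / σ ^ 2 := by positivity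
  nlinarith

lemma gma2_gt_one (σ μ q : ℝ) (hσ : 0 < σ) (hq : 0 < q) (hμq : μ < q) :
    1 < gma2 σ μ q := by
  have hδ := dlt_pos σ μ q hσ hq
  have hgap : dlt σ μ q ^ 2 - (1 - gma σ μ) ^ 2 = 2 * (q - μ) / σ ^ 2 := by
    rw [dlt_sq σ μ q hσ hq, gma]
    field_simp
    ring
  have hgp : 0 < 2 * (q - μ) / σ ^ 2 := by
    have : 0 < q - μ := by linarith
    positivity
  rw [gma2]
  nlinarith [hδ, hgap, hgp]

lemma coth_eq (y : ℝ) (hy : 0 < y) :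
    Real.cosh y / Real.sinh y = (1 + Real.exp (-(2*y))) / (1 - Real.exp (-(2*y))) := by
  have hs : Real.sinh y ≠ 0 := ne_of_gt (by positivity)
  have he : Real.exp (-(2*y)) < 1 := by
    rw [Real.exp_lt_one_iff]; linarith
  have h1 := Real.cosh_sub_sinh y
  have h2 := Real.cosh_add_sinh y
  have h3 : Real.exp (-(2*y)) * Real.exp y = Real.exp (-y) := by
    rw [← Real.exp_add]; ring_nf
  rw [div_eq_div_iff hs (by linarith)]
  linear_combination h1 - Real.exp (-(2*y)) * h2 - h3

lemma coth_tendsto_comp (δ : ℝ) (hδ : 0 < δ) :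
    Tendsto (fun x => (1 + Real.exp (-(2*(δ*x)))) / (1 - Real.exp (-(2*(δ*x)))))
      atTop (nhds 1) := by
  have hu : Tendsto (fun x : ℝ => Real.exp (-(2*(δ*x)))) atTop (nhds 0) := by
    have h1 : Tendsto (fun x : ℝ => 2*(δ*x)) atTop atTop :=
      Tendsto.const_mul_atTop (by linarith) (Tendsto.const_mul_atTop hδ tendsto_id)
    exact Real.tendsto_exp_neg_atTop_nhds_zero.comp h1
  have h1 : Tendsto (fun x : ℝ => 1 + Real.exp (-(2*(δ*x)))) atTop (nhds (1+0)) :=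
    tendsto_const_nhds.add hu
  have h2 : Tendsto (fun x : ℝ => 1 - Real.exp (-(2*(δ*x)))) atTop (nhds (1-0)) :=
    tendsto_const_nhds.sub hu
  have := h1.div h2 (by norm_num)
  simp only [add_zero, sub_zero, div_one] at this
  exact this

lemma lim_atTop (σ μ q : ℝ) (hσ : 0 < σ) (hq : 0 < q) :
    Tendsto (fun x => 1 - Z σ μ q x / (q * W σ μ q x)) atTop
      (nhds (1 - 1 / gma2 σ μ q)) := by
  have hδ : 0 < dlt σ μ q := dlt_pos σ μ q hσ hq
  set δ := dlt σ μ q with hδdef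
  set γ := gma σ μ with hγdef
  have hσ2 : (0:ℝ) < σ^2 := by positivity
  have key : ∀ x : ℝ, 0 < x →
      1 - Z σ μ q x / (q * W σ μ q x)
        = 1 - σ^2/(2*q) * (δ * ((1 + Real.exp (-(2*(δ*x))))/(1 - Real.exp (-(2*(δ*x))))) - γ) := by
    intro x hx
    have hs : 0 < Real.sinh (δ*x) := by positivity
    rw [Z, W, if_pos hx.le, if_pos hx.le, ← hδdef, ← hγdef, ← coth_eq _ (by positivity)]
    have he : Real.exp (γ*x) ≠ 0 := Real.exp_ne_zero _
    field_simp
  have hcoth := coth_tendsto_comp δ hδ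
  have hF : Tendsto (fun x => 1 - σ^2/(2*q) *
      (δ * ((1 + Real.exp (-(2*(δ*x))))/(1 - Real.exp (-(2*(δ*x))))) - γ)) atTop
      (nhds (1 - σ^2/(2*q) * (δ * 1 - γ))) :=
    tendsto_const_nhds.sub (((hcoth.const_mul δ).sub tendsto_const_nhds).const_mul (σ^2/(2*q)))
  have hval : 1 - σ^2/(2*q) * (δ * 1 - γ) = 1 - 1 / gma2 σ μ q := by
    have hb : 0 < gma2 σ μ q := gma2_pos σ μ q hσ hq
    have hab := gma1_mul_gma2 σ μ q hσ hq
    rw [gma1, gma2, ← hδdef, ← hγdef] at hab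
    rw [gma2, ← hδdef, ← hγdef]
    have hb' : γ + δ ≠ 0 := by rw [gma2, ← hδdef, ← hγdef] at hb; linarith
    have hab2 : σ^2 * ((γ - δ) * (γ + δ)) = -(2*q) := by
      rw [hab]; field_simp
    field_simp
    linear_combination hab2
  rw [← hval]
  exact hF.congr' (by filter_upwards [eventually_gt_atTop 0] with x hx using (key x hx).symm)

lemma kstar_pos (σ μ q : ℝ) (hσ : 0 < σ) (hq : 0 < q) (hμq : μ < q) :
    0 < kstar σ μ q := by
  have ha : gma1 σ μ q < 0 := gma1_neg σ μ q hσ hq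
  have hb1 : 1 < gma2 σ μ q := gma2_gt_one σ μ q hσ hq hμq
  have h1a : (0:ℝ) < 1 - 1 / gma1 σ μ q := by
    have : 1 / gma1 σ μ q < 0 := one_div_neg.mpr ha
    linarith
  have h1b : (0:ℝ) < 1 - 1 / gma2 σ μ q := by
    have : 1 / gma2 σ μ q < 1 := by
      rw [div_lt_one (by linarith)]; linarith
    linarith
  have hE1 : 1 < (1 - 1 / gma1 σ μ q) / (1 - 1 / gma2 σ μ q) := by
    rw [lt_div_iff₀ h1b]
    have h1b' : 1 / gma2 σ μ q > 0 := by positivity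
    have h1a' : 1 / gma1 σ μ q < 0 := one_div_neg.mpr ha
    linarith
  rw [kstar]
  have hba : 0 < gma2 σ μ q - gma1 σ μ q := by linarith
  exact mul_pos (inv_pos.mpr hba) (Real.log_pos hE1)

lemma Zk_eq (σ μ q : ℝ) (hσ : 0 < σ) (hq : 0 < q) (hμq : μ < q) :
    Z σ μ q (kstar σ μ q) = q * W σ μ q (kstar σ μ q) := by
  have ha : gma1 σ μ q < 0 := gma1_neg σ μ q hσ hq
  have hb1 : 1 < gma2 σ μ q := gma2_gt_one σ μ q hσ hq hμq
  have hδ : 0 < dlt σ μ q := dlt_pos σ μ q hσ hq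
  have hk : 0 < kstar σ μ q := kstar_pos σ μ q hσ hq hμq
  have h1a : (0:ℝ) < 1 - 1 / gma1 σ μ q := by
    have : 1 / gma1 σ μ q < 0 := one_div_neg.mpr ha
    linarith
  have h1b : (0:ℝ) < 1 - 1 / gma2 σ μ q := by
    have : 1 / gma2 σ μ q < 1 := by
      rw [div_lt_one (by linarith)]; linarith
    linarith
  have hba : gma2 σ μ q - gma1 σ μ q = 2 * dlt σ μ q := by rw [gma1, gma2]; ring
  have hE : Real.exp (2 * (dlt σ μ q * kstar σ μ q))
      = (1 - 1 / gma1 σ μ q) / (1 - 1 / gma2 σ μ q) := by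
    have h2 : 2 * (dlt σ μ q * kstar σ μ q)
        = Real.log ((1 - 1 / gma1 σ μ q) / (1 - 1 / gma2 σ μ q)) := by
      rw [kstar, hba]
      field_simp
    rw [h2, Real.exp_log (by positivity)]
  rw [Z, W, if_pos hk.le, if_pos hk.le, Real.sinh_eq, Real.cosh_eq, Real.exp_neg]
  set t := Real.exp (dlt σ μ q * kstar σ μ q) with htdef
  have ht : 0 < t := Real.exp_pos _
  have ht2 : t ^ 2 = (1 - 1 / gma1 σ μ q) / (1 - 1 / gma2 σ μ q) := by
    rw [sq, htdef, ← Real.exp_add,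
      show dlt σ μ q * kstar σ μ q + dlt σ μ q * kstar σ μ q
        = 2 * (dlt σ μ q * kstar σ μ q) by ring, hE]
  have key : σ ^ 2 * (dlt σ μ q * (t ^ 2 + 1) - gma σ μ * (t ^ 2 - 1))
      = 2 * q * (t ^ 2 - 1) := by
    have hγab : gma σ μ = (gma1 σ μ q + gma2 σ μ q) / 2 := by rw [gma1, gma2]; ring
    have hδab : dlt σ μ q = (gma2 σ μ q - gma1 σ μ q) / 2 := by rw [gma1, gma2]; ring
    have hab2 : σ ^ 2 * (gma1 σ μ q * gma2 σ μ q) = -(2 * q) := by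
      rw [gma1_mul_gma2 σ μ q hσ hq]; field_simp
    have ha0 : gma1 σ μ q ≠ 0 := ha.ne
    have hb0 : gma2 σ μ q ≠ 0 := by linarith
    have hb1' : gma2 σ μ q - 1 ≠ 0 := by linarith
    have hEeq : (1 - 1 / gma1 σ μ q) / (1 - 1 / gma2 σ μ q)
        = (gma2 σ μ q * (gma1 σ μ q - 1)) / (gma1 σ μ q * (gma2 σ μ q - 1)) := by
      rw [div_eq_div_iff h1b.ne' (by exact mul_ne_zero ha0 hb1')]
      field_simp
    rw [ht2, hEeq, hγab, hδab]
    field_simp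
    linear_combination (2 * (gma2 σ μ q - gma1 σ μ q)) * hab2
  have hσ2 : (0:ℝ) < σ ^ 2 := by positivity
  field_simp
  linear_combination key

theorem stmt_15 (σ μ q ε : ℝ) (hσ : 0 < σ) (hq : 0 < q)
    (g : ℝ → ℝ)
    (hode : ∀ s ∈ Set.Iio ε, HasDerivAt g (1 - Z σ μ q (g s) / (q * W σ μ q (g s))) s) :
    ((μ < q ∧ (∀ s ∈ Set.Iio ε, g s ∈ Set.Ioo 0 (kstar σ μ q)) ∧
        Filter.Tendsto g Filter.atBot (nhds (kstar σ μ q))) →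
      Filter.Tendsto (fun s => 1 - Z σ μ q (g s) / (q * W σ μ q (g s)))
        Filter.atBot (nhds 0)) ∧
    ((q ≤ μ ∧ (∀ s ∈ Set.Iio ε, g s ∈ Set.Ioi (0 : ℝ)) ∧
        Filter.Tendsto g Filter.atBot Filter.atTop) →
      Filter.Tendsto (fun s => 1 - Z σ μ q (g s) / (q * W σ μ q (g s)))
        Filter.atBot (nhds (1 - 1 / gma2 σ μ q))) := by
  constructor
  · rintro ⟨hμq, -, hgl⟩
    have hδ : 0 < dlt σ μ q := dlt_pos σ μ q hσ hq
    have hk : 0 < kstar σ μ q := kstar_pos σ μ q hσ hq hμq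
    have hWpos : 0 < W σ μ q (kstar σ μ q) := by
      rw [W, if_pos hk.le]
      have hs : 0 < Real.sinh (dlt σ μ q * kstar σ μ q) := by
        rw [Real.sinh_pos_iff]; positivity
      positivity
    have hne : q * W σ μ q (kstar σ μ q) ≠ 0 := ne_of_gt (mul_pos hq hWpos)
    have hzero : 1 - Z σ μ q (kstar σ μ q) / (q * W σ μ q (kstar σ μ q)) = 0 := by
      rw [Zk_eq σ μ q hσ hq hμq, div_self hne, sub_self]
    have hcont : ContinuousAt (fun x => 1 - Z σ μ q x / (q * W σ μ q x)) (kstar σ μ q) := by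
      have hne0 : q * (2 / (σ ^ 2 * dlt σ μ q) * Real.exp (gma σ μ * kstar σ μ q) *
          Real.sinh (dlt σ μ q * kstar σ μ q)) ≠ 0 := by
        rw [W, if_pos hk.le] at hne; exact hne
      have hc0 : ContinuousAt (fun x => 1 -
          (Real.exp (gma σ μ * x) * Real.cosh (dlt σ μ q * x)
            - gma σ μ / dlt σ μ q * Real.exp (gma σ μ * x) * Real.sinh (dlt σ μ q * x)) /
          (q * (2 / (σ ^ 2 * dlt σ μ q) * Real.exp (gma σ μ * x) *
            Real.sinh (dlt σ μ q * x)))) (kstar σ μ q) :=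
        continuousAt_const.sub (ContinuousAt.div (by fun_prop) (by fun_prop) hne0)
      apply hc0.congr
      filter_upwards [eventually_gt_nhds hk] with x hx
      simp only [Z, W, if_pos hx.le]
    have ht : Tendsto (fun x => 1 - Z σ μ q x / (q * W σ μ q x))
        (nhds (kstar σ μ q)) (nhds 0) := by
      have := hcont.tendsto
      rwa [hzero] at this
    exact ht.comp hgl
  · rintro ⟨-, -, hgt⟩
    exact (lim_atTop σ μ q hσ hq).comp hgt
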